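/- arXiv:2006.03959 — 4 statements merged into one kernel-verified Lean document; each statement's English description precedes it below -/
import Mathlib

section
/- Let x and y be real-valued sub-Gaussian random variables with variance factor σ² > 0, i.e., E[exp(γx)] ≤ exp(γ²σ²/2) and E[exp(γy)] ≤ exp(γ²σ²/2) for all real γ. Then for all t > 0, P(|xy − E(xy)| ≥ 4σ²(√(8t) + t)) ≤ 2e^{−t}. -/
open MeasureTheory Real Set

set_option maxHeartbeats 1000000

lemma aux_step1 {u v : ℝ} (hu : 0 ≤ u) (huv : u ≤ v) :
    exp u - 1 - u ≤ exp v - 1 - v := by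
  have h1 : (1:ℝ) ≤ exp u := one_le_exp hu
  have h2 : (v - u) + 1 ≤ exp (v - u) := add_one_le_exp _
  have h3 : exp v = exp u * exp (v - u) := by rw [← exp_add]; ring_nf
  nlinarith [exp_pos u, exp_pos (v - u)]

lemma aux_exp_mono {u v : ℝ} (h : |u| ≤ v) : exp u - 1 - u ≤ exp v - 1 - v := by
  have hv : 0 ≤ v := (abs_nonneg u).trans h
  rcases le_or_gt 0 u with hu | hu
  · exact aux_step1 hu ((le_abs_self u).trans h)
  · have habs : |u| = -u := abs_of_neg hu
    have hstep : exp u - 1 - u ≤ exp (-u) - 1 - (-u) := by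
      have hs : -u ≤ Real.sinh (-u) := Real.self_le_sinh_iff.mpr (by linarith)
      rw [Real.sinh_eq, neg_neg] at hs
      linarith
    exact hstep.trans (aux_step1 (by linarith) (habs ▸ h))

lemma aux_tail {Ω : Type} [MeasurableSpace Ω] (P : Measure Ω) [IsProbabilityMeasure P]
    {z : Ω → ℝ} {σ : ℝ} (hσ : 0 < σ)
    (hint : ∀ γ : ℝ, Integrable (fun ω => Real.exp (γ * z ω)) P)
    (hsub : ∀ γ : ℝ, ∫ ω, Real.exp (γ * z ω) ∂P ≤ Real.exp (γ ^ 2 * σ ^ 2 / 2))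
    {u : ℝ} (hu : 0 ≤ u) :
    P {ω | u ≤ z ω} ≤ ENNReal.ofReal (Real.exp (-(u^2) / (2 * σ^2))) := by
  have hσ2 : (0:ℝ) < σ^2 := by positivity
  have hγ : (0:ℝ) ≤ u / σ^2 := by positivity
  have h := ProbabilityTheory.measure_ge_le_exp_mul_mgf (X := z) (μ := P) u hγ (hint _)
  rw [ENNReal.le_ofReal_iff_toReal_le (measure_ne_top P _) (exp_nonneg _)]
  refine h.trans ?_
  have hm : ProbabilityTheory.mgf z P (u / σ^2) ≤ Real.exp ((u/σ^2)^2 * σ^2 / 2) := hsub _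
  calc Real.exp (-(u/σ^2) * u) * ProbabilityTheory.mgf z P (u / σ^2)
      ≤ Real.exp (-(u/σ^2) * u) * Real.exp ((u/σ^2)^2 * σ^2 / 2) := by
        exact mul_le_mul_of_nonneg_left hm (exp_nonneg _)
    _ = Real.exp (-(u^2) / (2 * σ^2)) := by
        rw [← exp_add]; congr 1; field_simp; ring

lemma aux_tail_xy {Ω : Type} [MeasurableSpace Ω] (P : Measure Ω) [IsProbabilityMeasure P]
    {x y : Ω → ℝ} {σ : ℝ} (hσ : 0 < σ)
    (hxint : ∀ γ : ℝ, Integrable (fun ω => Real.exp (γ * x ω)) P)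
    (hyint : ∀ γ : ℝ, Integrable (fun ω => Real.exp (γ * y ω)) P)
    (hxsub : ∀ γ : ℝ, ∫ ω, Real.exp (γ * x ω) ∂P ≤ Real.exp (γ ^ 2 * σ ^ 2 / 2))
    (hysub : ∀ γ : ℝ, ∫ ω, Real.exp (γ * y ω) ∂P ≤ Real.exp (γ ^ 2 * σ ^ 2 / 2))
    {t : ℝ} (ht : 0 ≤ t) :
    P {ω | t ≤ |x ω * y ω|} ≤ ENNReal.ofReal (4 * Real.exp (-t / (2 * σ^2))) := by
  set u := Real.sqrt t with hu
  have hu0 : 0 ≤ u := Real.sqrt_nonneg t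
  have hsub : {ω | t ≤ |x ω * y ω|} ⊆
      ({ω | u ≤ x ω} ∪ {ω | u ≤ -x ω}) ∪ ({ω | u ≤ y ω} ∪ {ω | u ≤ -y ω}) := by
    intro ω hω
    simp only [mem_setOf_eq] at hω
    have hmax : t ≤ max (x ω ^ 2) (y ω ^ 2) := by
      rcases le_total |x ω| |y ω| with hc | hc
      · refine hω.trans (le_max_of_le_right ?_)
        calc |x ω * y ω| = |x ω| * |y ω| := abs_mul _ _
          _ ≤ |y ω| * |y ω| := mul_le_mul_of_nonneg_right hc (abs_nonneg _)
          _ = y ω ^ 2 := by rw [← abs_mul, ← sq, abs_sq]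
      · refine hω.trans (le_max_of_le_left ?_)
        calc |x ω * y ω| = |x ω| * |y ω| := abs_mul _ _
          _ ≤ |x ω| * |x ω| := mul_le_mul_of_nonneg_left hc (abs_nonneg _)
          _ = x ω ^ 2 := by rw [← abs_mul, ← sq, abs_sq]
    rcases le_max_iff.mp hmax with hc | hc
    · have : u ≤ |x ω| := by
        rw [← Real.sqrt_sq_eq_abs]; exact Real.sqrt_le_sqrt hc
      rcases abs_cases (x ω) with ⟨he, _⟩ | ⟨he, _⟩
      · exact Or.inl (Or.inl (by simpa [he] using this))
      · exact Or.inl (Or.inr (by simp only [mem_setOf_eq]; rw [he] at this; exact this))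
    · have : u ≤ |y ω| := by
        rw [← Real.sqrt_sq_eq_abs]; exact Real.sqrt_le_sqrt hc
      rcases abs_cases (y ω) with ⟨he, _⟩ | ⟨he, _⟩
      · exact Or.inr (Or.inl (by simpa [he] using this))
      · exact Or.inr (Or.inr (by simp only [mem_setOf_eq]; rw [he] at this; exact this))
  have e : -(u^2) / (2*σ^2) = -t / (2*σ^2) := by rw [Real.sq_sqrt ht]
  have hnx : ∀ γ : ℝ, Integrable (fun ω => Real.exp (γ * (-x ω))) P := fun γ => by
    simpa [neg_mul, mul_neg] using hxint (-γ)
  have hnxs : ∀ γ : ℝ, ∫ ω, Real.exp (γ * (-x ω)) ∂P ≤ Real.exp (γ ^ 2 * σ ^ 2 / 2) :=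
    fun γ => by simpa [neg_mul, mul_neg, neg_pow] using hxsub (-γ)
  have hny : ∀ γ : ℝ, Integrable (fun ω => Real.exp (γ * (-y ω))) P := fun γ => by
    simpa [neg_mul, mul_neg] using hyint (-γ)
  have hnys : ∀ γ : ℝ, ∫ ω, Real.exp (γ * (-y ω)) ∂P ≤ Real.exp (γ ^ 2 * σ ^ 2 / 2) :=
    fun γ => by simpa [neg_mul, mul_neg, neg_pow] using hysub (-γ)
  calc P {ω | t ≤ |x ω * y ω|}
      ≤ P (({ω | u ≤ x ω} ∪ {ω | u ≤ -x ω}) ∪ ({ω | u ≤ y ω} ∪ {ω | u ≤ -y ω})) :=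
        measure_mono hsub
    _ ≤ (P {ω | u ≤ x ω} + P {ω | u ≤ -x ω}) + (P {ω | u ≤ y ω} + P {ω | u ≤ -y ω}) := by
        refine (measure_union_le _ _).trans ?_
        exact add_le_add (measure_union_le _ _) (measure_union_le _ _)
    _ ≤ (ENNReal.ofReal (Real.exp (-(u^2) / (2*σ^2))) + ENNReal.ofReal (Real.exp (-(u^2) / (2*σ^2))))
        + (ENNReal.ofReal (Real.exp (-(u^2) / (2*σ^2))) + ENNReal.ofReal (Real.exp (-(u^2) / (2*σ^2)))) := by
        gcongr
        · exact aux_tail P hσ hxint hxsub hu0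
        · exact aux_tail P hσ hnx hnxs hu0
        · exact aux_tail P hσ hyint hysub hu0
        · exact aux_tail P hσ hny hnys hu0
    _ = ENNReal.ofReal (4 * Real.exp (-t / (2 * σ^2))) := by
        rw [e, ← ENNReal.ofReal_add (exp_nonneg _) (exp_nonneg _),
          ← ENNReal.ofReal_add (by positivity) (by positivity)]
        congr 1; ring

lemma aux_int_exp_neg {b : ℝ} (hb : 0 < b) :
    ∫ t in Ioi (0:ℝ), Real.exp (-(b * t)) = 1 / b := by
  have := integral_comp_mul_left_Ioi (fun x => Real.exp (-x)) 0 hb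
  simp only [mul_zero, integral_exp_neg_Ioi, neg_zero, Real.exp_zero, smul_eq_mul,
    mul_one] at this
  rw [this]; simp [one_div]

lemma aux_antideriv {s : ℝ} (v : ℝ) :
    ∫ t in (0:ℝ)..v, s * (Real.exp (s * t) - 1) = Real.exp (s * v) - 1 - s * v := by
  have h : ∀ t : ℝ, HasDerivAt (fun t => Real.exp (s * t) - s * t)
      (s * (Real.exp (s * t) - 1)) t := by
    intro t
    have h1 : HasDerivAt (fun t : ℝ => s * t) s t := by
      simpa using (hasDerivAt_id t).const_mul s
    have h2 : HasDerivAt (fun t => Real.exp (s * t)) (Real.exp (s * t) * s) t := h1.exp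
    have := h2.sub h1
    rw [show s * (Real.exp (s * t) - 1) = Real.exp (s * t) * s - s by ring]; exact this
  have hcont : Continuous fun t => s * (Real.exp (s * t) - 1) := by continuity
  rw [intervalIntegral.integral_eq_sub_of_hasDerivAt (fun t _ => h t)
    (hcont.intervalIntegrable 0 v)]
  simp; ring

lemma aux_lintegral_G {Ω : Type} [MeasurableSpace Ω] (P : Measure Ω) [IsProbabilityMeasure P]
    {w : Ω → ℝ} (hw : Measurable w) {σ s : ℝ} (hσ : 0 < σ) (hs : 0 < s)
    (hs2 : s ≤ 1 / (4 * σ^2))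
    (htail : ∀ t : ℝ, 0 ≤ t → P {ω | t ≤ |w ω|} ≤ ENNReal.ofReal (4 * Real.exp (-t / (2 * σ^2)))) :
    ∫⁻ ω, ENNReal.ofReal (Real.exp (s * |w ω|) - 1 - s * |w ω|) ∂P
      ≤ ENNReal.ofReal (32 * s^2 * σ^4) := by
  set a : ℝ := 1 / (2 * σ^2) with ha
  have ha0 : 0 < a := by positivity
  have has : s ≤ a / 2 := by rw [ha, div_div]; convert hs2 using 2; ring
  have has0 : 0 < a - s := by linarith
  have hg_int : ∀ t : ℝ, t > 0 → IntervalIntegrable (fun t => s * (Real.exp (s * t) - 1))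
      volume 0 t := fun t _ =>
    ((by continuity : Continuous fun t => s * (Real.exp (s * t) - 1))).intervalIntegrable 0 t
  have hg_nn : ∀ᵐ t ∂(volume.restrict (Ioi (0:ℝ))), 0 ≤ s * (Real.exp (s * t) - 1) := by
    filter_upwards [ae_restrict_mem measurableSet_Ioi] with t ht
    have ht0 : (0:ℝ) < t := mem_Ioi.mp ht
    have : (1:ℝ) ≤ Real.exp (s * t) := by
      rw [← Real.exp_zero]; exact Real.exp_le_exp.mpr (by nlinarith)
    nlinarith
  have hlayer := lintegral_comp_eq_lintegral_meas_le_mul (f := fun ω => |w ω|)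
      (g := fun t => s * (Real.exp (s * t) - 1)) P
      (Filter.Eventually.of_forall fun ω => abs_nonneg _) (hw.abs.aemeasurable) hg_int hg_nn
  have hLHS : ∫⁻ ω, ENNReal.ofReal (Real.exp (s * |w ω|) - 1 - s * |w ω|) ∂P
      = ∫⁻ ω, ENNReal.ofReal (∫ t in (0:ℝ)..|w ω|, s * (Real.exp (s * t) - 1)) ∂P := by
    congr 1; funext ω; rw [aux_antideriv]
  rw [hLHS, hlayer]
  have hfun : ∀ t : ℝ, 0 < t →
      (4 * Real.exp (-t / (2 * σ^2))) * (s * (Real.exp (s * t) - 1))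
        = 4 * s * (Real.exp (-((a - s) * t)) - Real.exp (-(a * t))) := by
    intro t ht
    have h1 : Real.exp (-t / (2*σ^2)) * Real.exp (s*t) = Real.exp (-((a-s)*t)) := by
      rw [← Real.exp_add]; congr 1; rw [ha]; field_simp; ring
    have h2 : Real.exp (-t / (2*σ^2)) = Real.exp (-(a*t)) := by
      congr 1; rw [ha]; field_simp
    nlinarith [h1, h2]
  have hi1 : IntegrableOn (fun t => Real.exp (-((a-s)*t))) (Ioi (0:ℝ)) :=
    (exp_neg_integrableOn_Ioi 0 has0).congr_fun (fun t _ => by simp only [neg_mul]) measurableSet_Ioi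
  have hi2 : IntegrableOn (fun t => Real.exp (-(a*t))) (Ioi (0:ℝ)) :=
    (exp_neg_integrableOn_Ioi 0 ha0).congr_fun (fun t _ => by simp only [neg_mul]) measurableSet_Ioi
  have hintegrable : IntegrableOn
      (fun t => 4 * s * (Real.exp (-((a - s) * t)) - Real.exp (-(a * t)))) (Ioi (0:ℝ)) :=
    (hi1.sub hi2).const_mul _
  calc ∫⁻ t in Ioi (0:ℝ), P {a | t ≤ |w a|} * ENNReal.ofReal (s * (Real.exp (s * t) - 1))
      ≤ ∫⁻ t in Ioi (0:ℝ),
          ENNReal.ofReal (4 * s * (Real.exp (-((a - s) * t)) - Real.exp (-(a * t)))) := by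
        apply lintegral_mono_ae
        filter_upwards [ae_restrict_mem measurableSet_Ioi] with t ht
        rw [← hfun t (mem_Ioi.mp ht),
          ENNReal.ofReal_mul (p := 4 * Real.exp (-t / (2*σ^2))) (by positivity)]
        exact mul_le_mul_left (htail t (le_of_lt (mem_Ioi.mp ht))) _
    _ = ENNReal.ofReal (∫ t in Ioi (0:ℝ),
          4 * s * (Real.exp (-((a - s) * t)) - Real.exp (-(a * t)))) := by
        rw [← ofReal_integral_eq_lintegral_ofReal hintegrable]
        filter_upwards [ae_restrict_mem measurableSet_Ioi] with t ht
        have h1 : Real.exp (-(a * t)) ≤ Real.exp (-((a - s) * t)) := by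
          apply Real.exp_le_exp.mpr; nlinarith [le_of_lt (mem_Ioi.mp ht)]
        show (0:ℝ) ≤ 4 * s * (Real.exp (-((a - s) * t)) - Real.exp (-(a * t)))
        nlinarith
    _ ≤ ENNReal.ofReal (32 * s^2 * σ^4) := by
        apply ENNReal.ofReal_le_ofReal
        rw [integral_const_mul, integral_sub hi1 hi2, aux_int_exp_neg has0, aux_int_exp_neg ha0]
        have hprod : 1/(8*σ^4) ≤ a*(a-s) := by
          have h1 : a/2 ≤ a - s := by linarith
          have h2 : a * (a/2) ≤ a * (a-s) := mul_le_mul_of_nonneg_left h1 ha0.le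
          have h3 : a * (a/2) = 1/(8*σ^4) := by rw [ha]; field_simp; ring
          linarith
        have hkey : 1/(a-s) - 1/a = s/(a*(a-s)) := by
          rw [div_sub_div _ _ has0.ne' ha0.ne']; congr 1 <;> ring
        rw [hkey]
        have h4 : s/(a*(a-s)) ≤ 8*s*σ^4 := by
          rw [div_le_iff₀ (by positivity)]
          have h5 := mul_le_mul_of_nonneg_left hprod (by positivity : (0:ℝ) ≤ 8*s*σ^4)
          have h6 : 8*s*σ^4 * (1/(8*σ^4)) = s := by field_simp
          linarith
        have h7 := mul_le_mul_of_nonneg_left h4 (by positivity : (0:ℝ) ≤ 4*s)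
        nlinarith

lemma aux_mgf {Ω : Type} [MeasurableSpace Ω] (P : Measure Ω) [IsProbabilityMeasure P]
    {w : Ω → ℝ} (hw : Measurable w) (hwi : Integrable w P) {σ l : ℝ} (hσ : 0 < σ)
    (hl : |l| ≤ 1 / (4 * σ^2))
    (htail : ∀ t : ℝ, 0 ≤ t → P {ω | t ≤ |w ω|} ≤ ENNReal.ofReal (4 * Real.exp (-t / (2 * σ^2)))) :
    Integrable (fun ω => Real.exp (l * w ω)) P ∧
      ∫ ω, Real.exp (l * (w ω - ∫ ω', w ω' ∂P)) ∂P ≤ Real.exp (32 * l^2 * σ^4) := by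
  rcases eq_or_ne l 0 with rfl | hl0
  · simp
  set s : ℝ := |l| with hsdef
  have hs : 0 < s := abs_pos.mpr hl0
  set m : ℝ := ∫ ω', w ω' ∂P with hm
  set G : Ω → ℝ := fun ω => Real.exp (s * |w ω|) - 1 - s * |w ω| with hG
  have hG_nn : ∀ ω, 0 ≤ G ω := by
    intro ω
    have := add_one_le_exp (s * |w ω|)
    simp only [hG]; nlinarith
  have hG_meas : Measurable G := by
    apply Measurable.sub
    · exact (hw.abs.const_mul s).exp.sub measurable_const
    · exact hw.abs.const_mul s
  have hG_lint := aux_lintegral_G P hw hσ hs hl htail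
  have hG_int : Integrable G P := by
    refine ⟨hG_meas.aestronglyMeasurable, ?_⟩
    rw [hasFiniteIntegral_iff_ofReal (Filter.Eventually.of_forall hG_nn)]
    exact lt_of_le_of_lt hG_lint ENNReal.ofReal_lt_top
  have hGval : ∫ ω, G ω ∂P ≤ 32 * s^2 * σ^4 := by
    have h1 : ∫ ω, G ω ∂P = (∫⁻ ω, ENNReal.ofReal (G ω) ∂P).toReal := by
      rw [integral_eq_lintegral_of_nonneg_ae (Filter.Eventually.of_forall hG_nn)
        hG_meas.aestronglyMeasurable]
    rw [h1]
    calc (∫⁻ ω, ENNReal.ofReal (G ω) ∂P).toReal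
        ≤ (ENNReal.ofReal (32 * s^2 * σ^4)).toReal :=
          ENNReal.toReal_mono ENNReal.ofReal_ne_top hG_lint
      _ = 32 * s^2 * σ^4 := ENNReal.toReal_ofReal (by positivity)
  -- pointwise bound
  have hpt : ∀ ω, Real.exp (l * w ω) ≤ 1 + l * w ω + G ω := by
    intro ω
    have h := aux_exp_mono (u := l * w ω) (v := s * |w ω|)
      (by rw [abs_mul, hsdef])
    simp only [hG]; nlinarith
  have hbound_int : Integrable (fun ω => 1 + l * w ω + G ω) P :=
    ((integrable_const 1).add (hwi.const_mul l)).add hG_int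
  have hint : Integrable (fun ω => Real.exp (l * w ω)) P := by
    refine hbound_int.mono' ((hw.const_mul l).exp.aestronglyMeasurable) ?_
    filter_upwards with ω
    rw [Real.norm_eq_abs, abs_of_pos (exp_pos _)]
    exact hpt ω
  refine ⟨hint, ?_⟩
  have hsplit : (fun ω => Real.exp (l * (w ω - m)))
      = fun ω => Real.exp (l * w ω) * Real.exp (-(l * m)) := by
    funext ω; rw [← Real.exp_add]; congr 1; ring
  have step1 : ∫ ω, Real.exp (l * w ω) ∂P ≤ 1 + l * m + 32 * s^2 * σ^4 := by
    calc ∫ ω, Real.exp (l * w ω) ∂P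
        ≤ ∫ ω, (1 + l * w ω + G ω) ∂P :=
          integral_mono hint hbound_int hpt
      _ = 1 + l * m + ∫ ω, G ω ∂P := by
          have h1 : Integrable (fun ω => 1 + l * w ω) P :=
            (integrable_const 1).add (hwi.const_mul l)
          rw [integral_add h1 hG_int, integral_add (integrable_const (1:ℝ)) (hwi.const_mul l),
            integral_const, integral_const_mul]
          simp [hm]
      _ ≤ 1 + l * m + 32 * s^2 * σ^4 := by linarith [hGval]
  calc ∫ ω, Real.exp (l * (w ω - m)) ∂P
      = (∫ ω, Real.exp (l * w ω) ∂P) * Real.exp (-(l * m)) := by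
        rw [hsplit, integral_mul_const]
    _ ≤ (1 + l * m + 32 * s^2 * σ^4) * Real.exp (-(l * m)) := by
        exact mul_le_mul_of_nonneg_right step1 (exp_nonneg _)
    _ ≤ Real.exp (l * m + 32 * s^2 * σ^4) * Real.exp (-(l * m)) := by
        refine mul_le_mul_of_nonneg_right ?_ (exp_nonneg _)
        have := add_one_le_exp (l * m + 32 * s^2 * σ^4)
        linarith
    _ = Real.exp (32 * l^2 * σ^4) := by
        rw [← Real.exp_add]; congr 1
        have : s^2 = l^2 := by rw [hsdef, sq_abs]
        rw [this]; ring

/-- if `x, y` are real sub-Gaussian random variables with variance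
factor `σ² > 0` (i.e. `E exp(γx) ≤ exp(γ²σ²/2)` for all `γ`), then for all `t > 0`,
`P(|xy − E(xy)| ≥ 4σ²(√(8t)+t)) ≤ 2 e^{−t}`. -/
theorem stmt_4 {Ω : Type} [MeasurableSpace Ω] (P : Measure Ω) [IsProbabilityMeasure P]
    (x y : Ω → ℝ) (hx : Measurable x) (hy : Measurable y) (σ : ℝ) (hσ : 0 < σ)
    (hxint : ∀ γ : ℝ, Integrable (fun ω => Real.exp (γ * x ω)) P)
    (hyint : ∀ γ : ℝ, Integrable (fun ω => Real.exp (γ * y ω)) P)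
    (hxsub : ∀ γ : ℝ, ∫ ω, Real.exp (γ * x ω) ∂P ≤ Real.exp (γ ^ 2 * σ ^ 2 / 2))
    (hysub : ∀ γ : ℝ, ∫ ω, Real.exp (γ * y ω) ∂P ≤ Real.exp (γ ^ 2 * σ ^ 2 / 2))
    (hxy : Integrable (fun ω => x ω * y ω) P) :
    ∀ t : ℝ, 0 < t →
      (P {ω | 4 * σ ^ 2 * (Real.sqrt (8 * t) + t) ≤
          |x ω * y ω - ∫ ω', x ω' * y ω' ∂P|}).toReal ≤ 2 * Real.exp (-t) := by
  intro t ht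
  set w : Ω → ℝ := fun ω => x ω * y ω with hwdef
  have hw : Measurable w := hx.mul hy
  set m : ℝ := ∫ ω', w ω' ∂P with hm
  set r : ℝ := 4 * σ ^ 2 * (Real.sqrt (8 * t) + t) with hr
  have htail : ∀ u : ℝ, 0 ≤ u →
      P {ω | u ≤ |w ω|} ≤ ENNReal.ofReal (4 * Real.exp (-u / (2 * σ^2))) :=
    fun u hu => aux_tail_xy P hσ hxint hyint hxsub hysub hu
  -- choose lambda
  set l : ℝ := if t ≤ 1/2 then Real.sqrt t / (σ^2 * Real.sqrt 32) else 1/(4*σ^2) with hl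
  have hsqt : Real.sqrt t ^ 2 = t := Real.sq_sqrt ht.le
  have hsqt0 : 0 < Real.sqrt t := Real.sqrt_pos.mpr ht
  have hsq32 : Real.sqrt 32 ^ 2 = 32 := Real.sq_sqrt (by norm_num)
  have hsq320 : 0 < Real.sqrt 32 := Real.sqrt_pos.mpr (by norm_num)
  have hsq8 : Real.sqrt 8 ^ 2 = 8 := Real.sq_sqrt (by norm_num)
  have hsq80 : 0 < Real.sqrt 8 := Real.sqrt_pos.mpr (by norm_num)
  have h328 : Real.sqrt 32 = 2 * Real.sqrt 8 := by
    rw [show (32:ℝ) = 2^2 * 8 by norm_num, Real.sqrt_mul (by positivity),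
      Real.sqrt_sq (by norm_num)]
  have h8t : Real.sqrt (8 * t) = Real.sqrt 8 * Real.sqrt t := Real.sqrt_mul (by norm_num) t
  have hl0 : 0 < l := by
    rw [hl]; split_ifs
    · positivity
    · positivity
  have hl1 : l ≤ 1 / (4 * σ^2) := by
    rw [hl]; split_ifs with hcase
    · rw [div_le_div_iff₀ (by positivity) (by positivity)]
      have h1 : Real.sqrt t ≤ Real.sqrt 32 / 8 := by
        rw [le_div_iff₀ (by norm_num)]
        nlinarith [Real.sqrt_nonneg t, Real.sqrt_nonneg 32,
          Real.sqrt_le_sqrt (show t ≤ 1/2 from hcase)]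
      nlinarith [sq_nonneg σ]
    · linarith
  have hexp : 32 * l^2 * σ^4 - l * r ≤ -t := by
    rw [hl, hr]; split_ifs with hcase
    · have hlsq : (Real.sqrt t / (σ^2 * Real.sqrt 32))^2 = t / (32 * σ^4) := by
        rw [div_pow, mul_pow, hsqt, hsq32]; ring_nf
      have hA : 32 * (Real.sqrt t / (σ^2 * Real.sqrt 32))^2 * σ^4 = t := by
        rw [hlsq]; field_simp
      have hB : (Real.sqrt t / (σ^2 * Real.sqrt 32)) * (4 * σ ^ 2 * (Real.sqrt (8*t) + t))
          = 2*t + 2 * Real.sqrt t * t / Real.sqrt 8 := by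
        rw [h8t, h328]
        field_simp
        linear_combination (4*Real.sqrt 8) * hsqt
      rw [hA, hB]
      have : 0 ≤ 2 * Real.sqrt t * t / Real.sqrt 8 := by positivity
      linarith
    · have ht2 : (1:ℝ)/2 < t := lt_of_not_ge hcase
      have hA : 32 * (1/(4*σ^2))^2 * σ^4 = 2 := by field_simp; ring
      have hB : (1/(4*σ^2)) * (4 * σ ^ 2 * (Real.sqrt (8*t) + t)) = Real.sqrt (8*t) + t := by
        field_simp
      rw [hA, hB]
      have h2le : (2:ℝ) ≤ Real.sqrt (8*t) := by
        rw [show (2:ℝ) = Real.sqrt 4 by rw [show (4:ℝ) = 2^2 by norm_num, Real.sqrt_sq]; norm_num]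
        exact Real.sqrt_le_sqrt (by linarith)
      linarith
  -- chernoff on both sides
  have hmgf_pos := aux_mgf P hw hxy hσ (by rwa [abs_of_pos hl0]) htail
  have hmgf_neg := aux_mgf (l := -l) P hw hxy hσ (by rwa [abs_neg, abs_of_pos hl0]) htail
  have hchern_pos : (P {ω | r ≤ w ω - m}).toReal ≤ Real.exp (-t) := by
    have hint : Integrable (fun ω => Real.exp (l * (w ω - m))) P := by
      have := hmgf_pos.1.mul_const (Real.exp (-(l * m)))
      refine this.congr (Filter.Eventually.of_forall fun ω => ?_)
      simp only [← Real.exp_add]; congr 1; ring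
    have h := ProbabilityTheory.measure_ge_le_exp_mul_mgf (X := fun ω => w ω - m) (μ := P)
      r hl0.le hint
    refine h.trans ?_
    have hmgf : ProbabilityTheory.mgf (fun ω => w ω - m) P l ≤ Real.exp (32 * l^2 * σ^4) :=
      hmgf_pos.2
    calc Real.exp (-l * r) * ProbabilityTheory.mgf (fun ω => w ω - m) P l
        ≤ Real.exp (-l * r) * Real.exp (32 * l^2 * σ^4) :=
          mul_le_mul_of_nonneg_left hmgf (exp_nonneg _)
      _ = Real.exp (32 * l^2 * σ^4 - l * r) := by rw [← Real.exp_add]; congr 1; ring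
      _ ≤ Real.exp (-t) := Real.exp_le_exp.mpr hexp
  have hchern_neg : (P {ω | r ≤ m - w ω}).toReal ≤ Real.exp (-t) := by
    have hint : Integrable (fun ω => Real.exp (l * (m - w ω))) P := by
      have := hmgf_neg.1.mul_const (Real.exp (l * m))
      refine this.congr (Filter.Eventually.of_forall fun ω => ?_)
      simp only [← Real.exp_add]; congr 1; ring
    have h := ProbabilityTheory.measure_ge_le_exp_mul_mgf (X := fun ω => m - w ω) (μ := P)
      r hl0.le hint
    refine h.trans ?_
    have hmgf : ProbabilityTheory.mgf (fun ω => m - w ω) P l ≤ Real.exp (32 * l^2 * σ^4) := by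
      have h2 := hmgf_neg.2
      have e2 : (32:ℝ) * (-l)^2 * σ^4 = 32 * l^2 * σ^4 := by ring
      rw [e2] at h2
      have e3 : (fun ω => Real.exp (l * (m - w ω))) = fun ω => Real.exp (-l * (w ω - m)) :=
        funext fun ω => by congr 1; ring
      rw [ProbabilityTheory.mgf, e3]
      exact h2
    calc Real.exp (-l * r) * ProbabilityTheory.mgf (fun ω => m - w ω) P l
        ≤ Real.exp (-l * r) * Real.exp (32 * l^2 * σ^4) :=
          mul_le_mul_of_nonneg_left hmgf (exp_nonneg _)
      _ = Real.exp (32 * l^2 * σ^4 - l * r) := by rw [← Real.exp_add]; congr 1; ring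
      _ ≤ Real.exp (-t) := Real.exp_le_exp.mpr hexp
  have hsubset : {ω | r ≤ |w ω - m|} ⊆ {ω | r ≤ w ω - m} ∪ {ω | r ≤ m - w ω} := by
    intro ω hω
    simp only [mem_setOf_eq, mem_union] at *
    rcases abs_cases (w ω - m) with ⟨he, _⟩ | ⟨he, _⟩
    · left; linarith
    · right; linarith
  calc (P {ω | r ≤ |w ω - m|}).toReal
      ≤ (P {ω | r ≤ w ω - m} + P {ω | r ≤ m - w ω}).toReal := by
        apply ENNReal.toReal_mono
        · exact ENNReal.add_ne_top.mpr ⟨measure_ne_top _ _, measure_ne_top _ _⟩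
        · exact (measure_mono hsubset).trans (measure_union_le _ _)
    _ = (P {ω | r ≤ w ω - m}).toReal + (P {ω | r ≤ m - w ω}).toReal :=
        ENNReal.toReal_add (measure_ne_top _ _) (measure_ne_top _ _)
    _ ≤ Real.exp (-t) + Real.exp (-t) := add_le_add hchern_pos hchern_neg
    _ = 2 * Real.exp (-t) := by ring
end

section
/- Let x and y be real-valued sub-Gaussian random variables, each with variance factor σ² > 0. Then E[(xy − E(xy))²] ≤ 64σ⁴ and, for every integer q ≥ 3, E[max(xy − E(xy), 0)^q] ≤ 2 · q! · (4σ²)^q. -/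
open MeasureTheory Real Finset

lemma S_rec (q : ℕ) :
    (∑ k ∈ Finset.range (q+1+1), (q+1).descFactorial k * 3^k * 2^(q+1-k))
      = 3*(q+1) * (∑ k ∈ Finset.range (q+1), q.descFactorial k * 3^k * 2^(q-k)) + 2^(q+1) := by
  rw [Finset.sum_range_succ']
  simp only [Nat.succ_descFactorial_succ, Nat.succ_sub_succ, Nat.descFactorial_zero,
    pow_zero, Nat.sub_zero, one_mul]
  rw [Finset.mul_sum]
  congr 1
  apply Finset.sum_congr rfl
  intro k hk
  ring

lemma S_le : ∀ q : ℕ, 3 ≤ q →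
    (∑ k ∈ Finset.range (q+1), q.descFactorial k * 3^k * 2^(q-k)) ≤ q.factorial * 4^q := by
  intro q hq
  induction q, hq using Nat.le_induction with
  | base => decide
  | succ q hq ih =>
    rw [S_rec]
    have h1 : 2^(q+1) ≤ (q+1) * (q.factorial * 4^q) := by
      calc 2^(q+1) ≤ 2^(2*q) := Nat.pow_le_pow_right (by norm_num) (by omega)
        _ = 4^q := by rw [pow_mul]; norm_num
        _ ≤ (q+1) * (q.factorial * 4^q) := by
          have : 1 ≤ (q+1) * q.factorial := Nat.one_le_iff_ne_zero.mpr (by positivity)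
          calc 4^q = 1 * 4^q := (one_mul _).symm
            _ ≤ ((q+1) * q.factorial) * 4^q := Nat.mul_le_mul_right _ this
            _ = (q+1) * (q.factorial * 4^q) := by ring
    calc 3*(q+1) * (∑ k ∈ Finset.range (q+1), q.descFactorial k * 3^k * 2^(q-k)) + 2^(q+1)
        ≤ 3*(q+1) * (q.factorial * 4^q) + (q+1) * (q.factorial * 4^q) := by
          gcongr
      _ = (q+1).factorial * 4^(q+1) := by rw [Nat.factorial_succ]; ring

lemma aux_cosh (v : ℝ) : v^2 + 2 ≤ Real.exp v + Real.exp (-v) := by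
  have hs : (v/2)^2 ≤ Real.sinh (v/2)^2 := by
    rcases le_or_gt 0 v with h | h
    · have h1 : v/2 ≤ Real.sinh (v/2) := Real.self_le_sinh_iff.mpr (by linarith)
      nlinarith
    · have h1 : Real.sinh (v/2) ≤ v/2 := Real.sinh_le_self_iff.mpr (by linarith)
      nlinarith
  have hid : Real.exp v + Real.exp (-v) - 2 = (2 * Real.sinh (v/2))^2 := by
    rw [Real.sinh_eq]
    have e1 : Real.exp (v/2) * Real.exp (v/2) = Real.exp v := by rw [← Real.exp_add]; ring_nf
    have e2 : Real.exp (-(v/2)) * Real.exp (-(v/2)) = Real.exp (-v) := by rw [← Real.exp_add]; ring_nf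
    have e3 : Real.exp (v/2) * Real.exp (-(v/2)) = 1 := by rw [← Real.exp_add]; simp
    nlinarith [e1, e2, e3]
  nlinarith [hs, hid]

lemma aux_pow_exp (γ u : ℝ) (hγ : 0 < γ) (n : ℕ) :
    u ^ (2*n) ≤ ((2*n).factorial / γ ^ (2*n)) * (Real.exp (γ * u) + Real.exp (-γ * u)) := by
  set t := |u| with ht
  have htn : 0 ≤ t := abs_nonneg u
  have h1 : (γ * t) ^ (2*n) / (2*n).factorial ≤ Real.exp (γ * t) := by
    calc (γ * t) ^ (2*n) / (2*n).factorial
        ≤ ∑ i ∈ Finset.range (2*n+1), (γ*t)^i / i.factorial := by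
          refine Finset.single_le_sum (f := fun i => (γ*t)^i / (i.factorial : ℝ)) ?_ ?_
          · intro i _; positivity
          · exact Finset.self_mem_range_succ _
      _ ≤ Real.exp (γ * t) := Real.sum_le_exp_of_nonneg (by positivity) _
  have h2 : Real.exp (γ * t) ≤ Real.exp (γ * u) + Real.exp (-γ * u) := by
    rcases abs_cases u with ⟨he, _⟩ | ⟨he, _⟩
    · rw [ht, he]
      exact le_add_of_nonneg_right (Real.exp_pos _).le
    · rw [ht, he, show γ * -u = -γ * u by ring]
      exact le_add_of_nonneg_left (Real.exp_pos _).le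
  have h3 : γ ^ (2*n) * t ^ (2*n) ≤ (2*n).factorial * (Real.exp (γ * u) + Real.exp (-γ * u)) := by
    rw [div_le_iff₀ (by positivity)] at h1
    calc γ ^ (2*n) * t ^ (2*n) = (γ * t) ^ (2*n) := (mul_pow _ _ _).symm
      _ ≤ Real.exp (γ * t) * (2*n).factorial := h1
      _ ≤ (2*n).factorial * (Real.exp (γ * u) + Real.exp (-γ * u)) := by
          rw [mul_comm]
          exact mul_le_mul_of_nonneg_left h2 (by positivity)
  have hu : u ^ (2*n) = t ^ (2*n) := by
    rw [ht, ← abs_pow, abs_of_nonneg (Even.pow_nonneg (even_two_mul n) u)]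
  rw [hu, div_mul_eq_mul_div, le_div_iff₀ (by positivity), mul_comm]
  linarith [h3]

lemma moment_bound {Ω : Type} [MeasurableSpace Ω] (P : Measure Ω) [IsProbabilityMeasure P]
    (z : Ω → ℝ) (hz : Measurable z) (σ : ℝ) (hσ : 0 < σ)
    (hint : ∀ γ : ℝ, Integrable (fun ω => Real.exp (γ * z ω)) P)
    (hsub : ∀ γ : ℝ, ∫ ω, Real.exp (γ * z ω) ∂P ≤ Real.exp (γ ^ 2 * σ ^ 2 / 2))
    (n : ℕ) (hn : 1 ≤ n) :
    Integrable (fun ω => z ω ^ (2 * n)) P ∧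
      ∫ ω, z ω ^ (2 * n) ∂P ≤ 2 * n.factorial * 3 ^ n * (σ ^ 2) ^ n := by
  have h2n : (0:ℝ) < 2 * n := by
    have : (1:ℝ) ≤ (n:ℝ) := by exact_mod_cast hn
    linarith
  set γ : ℝ := Real.sqrt (2 * n) / σ with hγdef
  have hγ : 0 < γ := div_pos (Real.sqrt_pos.mpr h2n) hσ
  have hγsq : γ ^ 2 = 2 * n / σ ^ 2 := by
    rw [hγdef, div_pow, Real.sq_sqrt h2n.le]
  set c : ℝ := ((2*n).factorial : ℝ) / γ ^ (2*n) with hcdef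
  have hc : 0 ≤ c := by positivity
  have hptw : ∀ ω, z ω ^ (2*n) ≤ c * (Real.exp (γ * z ω) + Real.exp (-γ * z ω)) :=
    fun ω => aux_pow_exp γ (z ω) hγ n
  have hg : Integrable (fun ω => c * (Real.exp (γ * z ω) + Real.exp (-γ * z ω))) P :=
    ((hint γ).add (hint (-γ))).const_mul c
  have hInt : Integrable (fun ω => z ω ^ (2*n)) P := by
    refine hg.mono' ((hz.pow_const _).aestronglyMeasurable) ?_
    filter_upwards with ω
    rw [Real.norm_eq_abs, abs_of_nonneg (Even.pow_nonneg (even_two_mul n) _)]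
    exact hptw ω
  refine ⟨hInt, ?_⟩
  have hexpn : γ ^ 2 * σ ^ 2 / 2 = (n : ℝ) := by
    rw [hγsq]; field_simp
  have hγpow : γ ^ (2*n) = (2*n)^n / (σ^2)^n := by
    rw [pow_mul, hγsq, div_pow]
  have step1 : ∫ ω, z ω ^ (2*n) ∂P ≤ c * (2 * Real.exp n) := by
    calc ∫ ω, z ω ^ (2*n) ∂P
        ≤ ∫ ω, c * (Real.exp (γ * z ω) + Real.exp (-γ * z ω)) ∂P :=
          integral_mono hInt hg hptw
      _ = c * ((∫ ω, Real.exp (γ * z ω) ∂P) + ∫ ω, Real.exp (-γ * z ω) ∂P) := by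
          rw [integral_const_mul, integral_add (hint γ) (hint (-γ))]
      _ ≤ c * (Real.exp (γ^2 * σ^2/2) + Real.exp ((-γ)^2 * σ^2/2)) := by
          gcongr
          · exact hsub γ
          · exact hsub (-γ)
      _ = c * (2 * Real.exp n) := by rw [neg_sq, hexpn]; ring
  refine step1.trans ?_
  have hfact : ((2*n).factorial : ℝ) ≤ (n.factorial : ℝ) * (2*n)^n := by
    have h1 : (2*n).factorial = (2*n).descFactorial n * n.factorial := by
      have h2 : (2*n).choose n * n.factorial * (2*n - n).factorial = (2*n).factorial :=
        Nat.choose_mul_factorial_mul_factorial (by omega)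
      rw [Nat.descFactorial_eq_factorial_mul_choose]
      rw [show 2*n - n = n from by omega] at h2
      rw [← h2]; ring
    have h3 : (2*n).descFactorial n ≤ (2*n)^n := Nat.descFactorial_le_pow _ _
    calc ((2*n).factorial : ℝ) = ((2*n).descFactorial n : ℝ) * n.factorial := by
          rw [h1]; push_cast; ring
      _ ≤ ((2*n)^n : ℕ) * (n.factorial:ℝ) := by
          gcongr
      _ = (n.factorial : ℝ) * (2*n)^n := by push_cast; ring
  have hexp3 : Real.exp n ≤ 3^n := by
    calc Real.exp n = Real.exp 1 ^ n := by
          rw [← Real.exp_nat_mul]; norm_num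
      _ ≤ 3^n := by
          apply pow_le_pow_left₀ (Real.exp_pos 1).le
          linarith [Real.exp_one_lt_d9]
  have hpos : (0:ℝ) < ((2:ℝ)*n)^n := by positivity
  have hσn : (0:ℝ) < (σ^2)^n := by positivity
  rw [hcdef, hγpow]
  rw [div_div_eq_mul_div, div_mul_eq_mul_div, div_le_iff₀ (by positivity)]
  have := mul_le_mul hfact hexp3 (Real.exp_pos _).le (by positivity)
  nlinarith [hσn, this, hpos]

lemma sq_bound {Ω : Type} [MeasurableSpace Ω] (P : Measure Ω) [IsProbabilityMeasure P]
    (z : Ω → ℝ) (hz : Measurable z) (σ : ℝ) (hσ : 0 < σ)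
    (hint : ∀ γ : ℝ, Integrable (fun ω => Real.exp (γ * z ω)) P)
    (hsub : ∀ γ : ℝ, ∫ ω, Real.exp (γ * z ω) ∂P ≤ Real.exp (γ ^ 2 * σ ^ 2 / 2)) :
    Integrable (fun ω => z ω ^ 2) P ∧ ∫ ω, z ω ^ 2 ∂P ≤ 2 * σ ^ 2 := by
  have hI : Integrable (fun ω => z ω ^ 2) P := by
    have := (moment_bound P z hz σ hσ hint hsub 1 le_rfl).1
    simpa using this
  refine ⟨hI, ?_⟩
  set γ : ℝ := Real.sqrt 2 / σ with hγdef
  have hγsq : γ^2 = 2/σ^2 := by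
    rw [hγdef, div_pow, Real.sq_sqrt (by norm_num : (0:ℝ) ≤ 2)]
  have hγexp : γ^2 * σ^2/2 = 1 := by rw [hγsq]; field_simp
  have hptw : ∀ ω, γ^2 * z ω^2 + 2 ≤ Real.exp (γ * z ω) + Real.exp (-γ * z ω) := by
    intro ω
    calc γ^2 * z ω^2 + 2 = (γ * z ω)^2 + 2 := by ring
      _ ≤ Real.exp (γ * z ω) + Real.exp (-(γ * z ω)) := aux_cosh _
      _ = Real.exp (γ * z ω) + Real.exp (-γ * z ω) := by rw [neg_mul]
  have hL : Integrable (fun ω => γ^2 * z ω^2 + 2) P := (hI.const_mul _).add (integrable_const 2)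
  have h1 : γ^2 * (∫ ω, z ω^2 ∂P) + 2 ≤ 2 * Real.exp 1 := by
    have hR : Integrable (fun ω => Real.exp (γ * z ω) + Real.exp (-γ * z ω)) P :=
      (hint γ).add (hint (-γ))
    have hmono := integral_mono hL hR hptw
    rw [integral_add (hI.const_mul _) (integrable_const 2), integral_const_mul,
      integral_add (hint γ) (hint (-γ)), integral_const] at hmono
    simp only [measure_univ, probReal_univ, smul_eq_mul, one_mul] at hmono
    calc γ^2 * (∫ ω, z ω^2 ∂P) + 2
        ≤ (∫ ω, Real.exp (γ * z ω) ∂P) + ∫ ω, Real.exp (-γ * z ω) ∂P := hmono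
      _ ≤ Real.exp (γ^2 * σ^2/2) + Real.exp ((-γ)^2 * σ^2/2) := add_le_add (hsub γ) (hsub (-γ))
      _ = 2 * Real.exp 1 := by rw [neg_sq, hγexp]; ring
  have hγpos : 0 < γ^2 := by rw [hγsq]; positivity
  have he : Real.exp 1 < 3 := by linarith [Real.exp_one_lt_d9]
  have hγσ : γ^2 * σ^2 = 2 := by rw [hγsq]; field_simp
  have h2 : γ^2 * (∫ ω, z ω^2 ∂P) ≤ γ^2 * (2*σ^2) := by nlinarith [h1, he, hγσ]
  exact le_of_mul_le_mul_left h2 hγpos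

/-- for real sub-Gaussian `x, y` with variance factor `σ² > 0` (not
necessarily independent), `E[(xy − E(xy))²] ≤ 64σ⁴` and, for every integer `q ≥ 3`,
`E[max(xy − E(xy), 0)^q] ≤ 2 q! (4σ²)^q`. -/
theorem stmt_6 {Ω : Type} [MeasurableSpace Ω] (P : Measure Ω) [IsProbabilityMeasure P]
    (x y : Ω → ℝ) (hx : Measurable x) (hy : Measurable y) (σ : ℝ) (hσ : 0 < σ)
    (hxint : ∀ γ : ℝ, Integrable (fun ω => Real.exp (γ * x ω)) P)
    (hyint : ∀ γ : ℝ, Integrable (fun ω => Real.exp (γ * y ω)) P)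
    (hxsub : ∀ γ : ℝ, ∫ ω, Real.exp (γ * x ω) ∂P ≤ Real.exp (γ ^ 2 * σ ^ 2 / 2))
    (hysub : ∀ γ : ℝ, ∫ ω, Real.exp (γ * y ω) ∂P ≤ Real.exp (γ ^ 2 * σ ^ 2 / 2))
    (hxy : Integrable (fun ω => x ω * y ω) P) :
    (Integrable (fun ω => (x ω * y ω - ∫ ω', x ω' * y ω' ∂P) ^ 2) P ∧
      (∫ ω, (x ω * y ω - ∫ ω', x ω' * y ω' ∂P) ^ 2 ∂P) ≤ 64 * σ ^ 4) ∧
    ∀ q : ℕ, 3 ≤ q →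
      Integrable (fun ω => (max (x ω * y ω - ∫ ω', x ω' * y ω' ∂P) 0) ^ q) P ∧
      (∫ ω, (max (x ω * y ω - ∫ ω', x ω' * y ω' ∂P) 0) ^ q ∂P) ≤
        2 * (Nat.factorial q) * (4 * σ ^ 2) ^ q := by
  set μ : ℝ := ∫ ω', x ω' * y ω' ∂P with hμdef
  -- moments of |xy|^k
  have hfk : ∀ k : ℕ, Integrable (fun ω => |x ω * y ω|^k) P ∧
      ∫ ω, |x ω * y ω|^k ∂P ≤ 2 * k.factorial * 3^k * (σ^2)^k := by
    intro k
    rcases Nat.eq_zero_or_pos k with rfl | hk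
    · simp only [pow_zero]
      refine ⟨integrable_const 1, ?_⟩
      simp [measure_univ]
    · have hxm := moment_bound P x hx σ hσ hxint hxsub k hk
      have hym := moment_bound P y hy σ hσ hyint hysub k hk
      have hpt : ∀ ω, |x ω * y ω|^k ≤ (x ω ^ (2*k) + y ω ^ (2*k))/2 := by
        intro ω
        have e1 : x ω ^ (2*k) = (|x ω|^k)^2 := by
          rw [← pow_mul, mul_comm k 2, (even_two_mul k).pow_abs]
        have e2 : y ω ^ (2*k) = (|y ω|^k)^2 := by
          rw [← pow_mul, mul_comm k 2, (even_two_mul k).pow_abs]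
        rw [abs_mul, mul_pow, e1, e2]
        nlinarith [sq_nonneg (|x ω|^k - |y ω|^k)]
      have hdom : Integrable (fun ω => (x ω ^ (2*k) + y ω ^ (2*k))/2) P :=
        (hxm.1.add hym.1).div_const 2
      have hI : Integrable (fun ω => |x ω * y ω|^k) P := by
        refine hdom.mono' (((hx.mul hy).abs.pow_const _).aestronglyMeasurable) ?_
        filter_upwards with ω
        rw [Real.norm_eq_abs, abs_of_nonneg (by positivity)]
        exact hpt ω
      refine ⟨hI, ?_⟩
      calc ∫ ω, |x ω * y ω|^k ∂P ≤ ∫ ω, (x ω ^ (2*k) + y ω ^ (2*k))/2 ∂P :=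
            integral_mono hI hdom hpt
        _ = ((∫ ω, x ω ^ (2*k) ∂P) + ∫ ω, y ω ^ (2*k) ∂P)/2 := by
            rw [integral_div, integral_add hxm.1 hym.1]
        _ ≤ (2 * k.factorial * 3^k * (σ^2)^k + 2 * k.factorial * 3^k * (σ^2)^k)/2 := by
            gcongr
            · exact hxm.2
            · exact hym.2
        _ = 2 * k.factorial * 3^k * (σ^2)^k := by ring
  -- |μ| ≤ 2σ²
  have hx2 := sq_bound P x hx σ hσ hxint hxsub
  have hy2 := sq_bound P y hy σ hσ hyint hysub
  have hμbd : |μ| ≤ 2 * σ^2 := by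
    have hpt : ∀ ω, |x ω * y ω| ≤ (x ω^2 + y ω^2)/2 := by
      intro ω
      rw [abs_mul]
      nlinarith [sq_nonneg (|x ω| - |y ω|), sq_abs (x ω), sq_abs (y ω)]
    have hI : Integrable (fun ω => |x ω * y ω|) P := hxy.abs
    have hdom : Integrable (fun ω => (x ω^2 + y ω^2)/2) P := (hx2.1.add hy2.1).div_const 2
    calc |μ| ≤ ∫ ω, |x ω * y ω| ∂P := by
          rw [hμdef]
          have := norm_integral_le_integral_norm (μ := P) (f := fun ω' => x ω' * y ω')
          simpa [Real.norm_eq_abs, abs_mul] using this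
      _ ≤ ∫ ω, (x ω^2 + y ω^2)/2 ∂P := integral_mono hI hdom hpt
      _ = ((∫ ω, x ω^2 ∂P) + ∫ ω, y ω^2 ∂P)/2 := by
          rw [integral_div, integral_add hx2.1 hy2.1]
      _ ≤ (2*σ^2 + 2*σ^2)/2 := by gcongr; exacts [hx2.2, hy2.2]
      _ = 2 * σ^2 := by ring
  -- Part 1 : variance
  have hf2int : Integrable (fun ω => (x ω * y ω)^2) P := by
    have := (hfk 2).1
    simpa [sq_abs, mul_pow] using this
  have hf2bd : ∫ ω, (x ω * y ω)^2 ∂P ≤ 36 * σ^4 := by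
    have := (hfk 2).2
    simp only [sq_abs] at this
    calc ∫ ω, (x ω * y ω)^2 ∂P ≤ 2 * (2:ℕ).factorial * 3^2 * (σ^2)^2 := this
      _ = 36 * σ^4 := by norm_num [Nat.factorial]; ring
  have hexpand : (fun ω => (x ω * y ω - μ)^2)
      = fun ω => (x ω * y ω)^2 - (2*μ)*(x ω * y ω) + μ^2 := funext fun ω => by ring
  have hvarint : Integrable (fun ω => (x ω * y ω - μ)^2) P := by
    rw [hexpand]
    exact (hf2int.sub (hxy.const_mul (2*μ))).add (integrable_const _)
  constructor
  · refine ⟨hvarint, ?_⟩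
    have heq : ∫ ω, (x ω * y ω - μ)^2 ∂P = (∫ ω, (x ω * y ω)^2 ∂P) - μ^2 := by
      have hsint : Integrable (fun ω => (x ω * y ω)^2 - (2*μ)*(x ω * y ω)) P :=
        hf2int.sub (hxy.const_mul (2*μ))
      have hcint : Integrable (fun ω => (2*μ)*(x ω * y ω)) P := hxy.const_mul (2*μ)
      rw [hexpand, integral_add hsint (integrable_const _),
        integral_sub hf2int hcint, integral_const_mul, integral_const]
      simp only [measure_univ, probReal_univ, smul_eq_mul, one_mul, ← hμdef]
      ring
    rw [heq]
    nlinarith [sq_nonneg μ, hf2bd, sq_nonneg σ, sq_nonneg (σ^2)]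
  -- Part 2
  intro q hq
  set g : Ω → ℝ := fun ω => ∑ k ∈ Finset.range (q+1), |x ω * y ω|^k * |μ|^(q-k) * (q.choose k : ℝ)
    with hgdef
  have hgint : Integrable g P := by
    apply integrable_finset_sum
    intro k _
    exact ((hfk k).1.mul_const _).mul_const _
  have hptw : ∀ ω, (max (x ω * y ω - μ) 0)^q ≤ g ω := by
    intro ω
    have h0 : (0:ℝ) ≤ max (x ω * y ω - μ) 0 := le_max_right _ _
    have h1 : max (x ω * y ω - μ) 0 ≤ |x ω * y ω| + |μ| := by
      apply max_le
      · exact le_trans (le_abs_self _) (abs_sub _ _)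
      · positivity
    calc (max (x ω * y ω - μ) 0)^q ≤ (|x ω * y ω| + |μ|)^q := pow_le_pow_left₀ h0 h1 q
      _ = g ω := add_pow _ _ _
  have hmint : Integrable (fun ω => (max (x ω * y ω - μ) 0)^q) P := by
    refine hgint.mono' ?_ ?_
    · exact ((((hx.mul hy).sub measurable_const).max measurable_const).pow_const q).aestronglyMeasurable
    · filter_upwards with ω
      rw [Real.norm_eq_abs, abs_of_nonneg (pow_nonneg (le_max_right _ _) q)]
      exact hptw ω
  refine ⟨hmint, ?_⟩
  have hcast : ∀ k ∈ Finset.range (q+1),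
      (∫ ω, |x ω * y ω|^k * |μ|^(q-k) * (q.choose k : ℝ) ∂P)
        ≤ 2 * (σ^2)^q * ((q.descFactorial k * 3^k * 2^(q-k) : ℕ) : ℝ) := by
    intro k hk
    have hkq : k ≤ q := by
      have := Finset.mem_range.mp hk; omega
    have hIk := (hfk k).1
    have e1 : (∫ ω, |x ω * y ω|^k * |μ|^(q-k) * (q.choose k : ℝ) ∂P)
        = (∫ ω, |x ω * y ω|^k ∂P) * |μ|^(q-k) * (q.choose k : ℝ) := by
      rw [integral_mul_const, integral_mul_const]
    rw [e1]
    have hb1 : (∫ ω, |x ω * y ω|^k ∂P) ≤ 2 * k.factorial * 3^k * (σ^2)^k := (hfk k).2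
    have hb0 : 0 ≤ ∫ ω, |x ω * y ω|^k ∂P := integral_nonneg fun ω => by positivity
    have hb2 : |μ|^(q-k) ≤ (2*σ^2)^(q-k) := pow_le_pow_left₀ (abs_nonneg μ) hμbd _
    calc (∫ ω, |x ω * y ω|^k ∂P) * |μ|^(q-k) * (q.choose k : ℝ)
        ≤ (2 * k.factorial * 3^k * (σ^2)^k) * (2*σ^2)^(q-k) * (q.choose k : ℝ) := by
          apply mul_le_mul_of_nonneg_right _ (Nat.cast_nonneg _)
          exact mul_le_mul hb1 hb2 (by positivity) (by positivity)
      _ = 2 * (σ^2)^q * ((q.descFactorial k * 3^k * 2^(q-k) : ℕ) : ℝ) := by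
          rw [mul_pow]
          have hσq : (σ^2)^k * (σ^2)^(q-k) = (σ^2)^q := by
            rw [← pow_add, Nat.add_sub_cancel' hkq]
          have hdf : ((q.descFactorial k : ℕ) : ℝ) = (k.factorial : ℝ) * (q.choose k : ℝ) := by
            rw [Nat.descFactorial_eq_factorial_mul_choose]; push_cast; ring
          push_cast
          rw [hdf]
          linear_combination (2 * (k.factorial:ℝ) * (q.choose k) * 3^k * 2^(q-k)) * hσq
  calc ∫ ω, (max (x ω * y ω - μ) 0)^q ∂P
      ≤ ∫ ω, g ω ∂P := integral_mono hmint hgint hptw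
    _ = ∑ k ∈ Finset.range (q+1), ∫ ω, |x ω * y ω|^k * |μ|^(q-k) * (q.choose k : ℝ) ∂P := by
        rw [hgdef]
        exact integral_finset_sum _ fun k _ => ((hfk k).1.mul_const _).mul_const _
    _ ≤ ∑ k ∈ Finset.range (q+1), 2 * (σ^2)^q * ((q.descFactorial k * 3^k * 2^(q-k) : ℕ) : ℝ) :=
        Finset.sum_le_sum hcast
    _ = 2 * (σ^2)^q * ((∑ k ∈ Finset.range (q+1), q.descFactorial k * 3^k * 2^(q-k) : ℕ) : ℝ) := by
        rw [← Finset.mul_sum, Nat.cast_sum]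
    _ ≤ 2 * (σ^2)^q * ((q.factorial * 4^q : ℕ) : ℝ) := by
        gcongr
        exact_mod_cast S_le q hq
    _ = 2 * (Nat.factorial q) * (4 * σ ^ 2) ^ q := by
        push_cast
        rw [mul_pow]
        ring
end

section
/- Let f_{χ_d} denote the probability density function of the chi distribution with d degrees of freedom (the distribution of ‖Z‖ for Z ~ N(0, I_d)). Then sup_{t ≥ 0} f_{χ_d}(t) = O(1) as d → ∞; i.e., there is a universal constant C such that sup_{t≥0} f_{χ_d}(t) ≤ C for all d ≥ 1. -/
open Real MeasureTheory Set

/-- The p.d.f. of the chi distribution with `d` degrees of freedom. -/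
noncomputable def chiPDF (d : ℕ) (t : ℝ) : ℝ :=
  2 ^ (1 - (d : ℝ) / 2) * t ^ (d - 1) * Real.exp (-t ^ 2 / 2) / Real.Gamma ((d : ℝ) / 2)

namespace Stmt9Aux

noncomputable def g (n : ℕ) (t : ℝ) : ℝ := t ^ n * Real.exp (-t ^ 2 / 2)

lemma g_nonneg (n : ℕ) {t : ℝ} (ht : 0 ≤ t) : 0 ≤ g n t := by
  unfold g; positivity

/-- auxiliary: `1 + x ≥ exp (x - x^2)` for `x ≥ 0`. -/
lemma exp_sub_sq_le {x : ℝ} (hx : 0 ≤ x) : Real.exp (x - x ^ 2) ≤ 1 + x := by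
  have h1 : 1 + (x ^ 2 - x) ≤ Real.exp (x ^ 2 - x) := by
    have := Real.add_one_le_exp (x ^ 2 - x); linarith
  have h2 : (1 : ℝ) ≤ (1 + x) * Real.exp (x ^ 2 - x) := by
    calc (1 : ℝ) ≤ 1 + x ^ 3 := by nlinarith [pow_nonneg hx 3]
    _ = (1 + x) * (1 + (x ^ 2 - x)) := by ring
    _ ≤ (1 + x) * Real.exp (x ^ 2 - x) := by
        apply mul_le_mul_of_nonneg_left h1 (by linarith)
  have h3 : Real.exp (x - x ^ 2) * 1 ≤ Real.exp (x - x ^ 2) * ((1 + x) * Real.exp (x ^ 2 - x)) :=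
    mul_le_mul_of_nonneg_left h2 (Real.exp_pos _).le
  calc Real.exp (x - x ^ 2) = Real.exp (x - x ^ 2) * 1 := (mul_one _).symm
  _ ≤ Real.exp (x - x ^ 2) * ((1 + x) * Real.exp (x ^ 2 - x)) := h3
  _ = (1 + x) * (Real.exp (x - x ^ 2) * Real.exp (x ^ 2 - x)) := by ring
  _ = 1 + x := by rw [← Real.exp_add]; simp

/-- The mode of `g n` is at `√n`. -/
lemma g_le_g_sqrt (n : ℕ) {t : ℝ} (ht : 0 ≤ t) : g n t ≤ g n (Real.sqrt n) := by
  rcases Nat.eq_zero_or_pos n with h0 | hn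
  · subst h0
    simp only [g, pow_zero, one_mul, Nat.cast_zero, Real.sqrt_zero]
    apply Real.exp_le_exp.mpr; nlinarith
  set t0 : ℝ := Real.sqrt n with ht0def
  have ht0 : 0 ≤ t0 := Real.sqrt_nonneg _
  have ht0sq : t0 ^ 2 = n := Real.sq_sqrt (by positivity)
  have ht0pos : 0 < t0 := Real.sqrt_pos.mpr (by exact_mod_cast hn)
  rcases eq_or_lt_of_le ht with h | htpos
  · have : g n t = 0 := by
      simp [g, ← h, zero_pow (show n ≠ 0 by omega)]
    rw [this]; exact g_nonneg n ht0
  -- t > 0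
  have key : (t / t0) ^ n ≤ Real.exp ((n : ℝ) * (t / t0 - 1)) := by
    have h1 : t / t0 ≤ Real.exp (t / t0 - 1) := by
      have := Real.add_one_le_exp (t / t0 - 1); linarith
    calc (t / t0) ^ n ≤ (Real.exp (t / t0 - 1)) ^ n :=
          pow_le_pow_left₀ (by positivity) h1 n
    _ = Real.exp ((n : ℝ) * (t / t0 - 1)) := (Real.exp_nat_mul _ n).symm
  have hn_t0 : (n : ℝ) = t0 ^ 2 := ht0sq.symm
  have hexp : (n : ℝ) * (t / t0 - 1) = t0 * t - t0 ^ 2 := by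
    rw [hn_t0]; field_simp
  have ht_pow : t ^ n ≤ t0 ^ n * Real.exp (t0 * t - t0 ^ 2) := by
    have h2 : (t / t0) ^ n * t0 ^ n ≤ Real.exp (t0 * t - t0 ^ 2) * t0 ^ n := by
      apply mul_le_mul_of_nonneg_right _ (by positivity)
      rw [← hexp]; exact key
    have h3 : (t / t0) ^ n * t0 ^ n = t ^ n := by
      rw [div_pow, div_mul_cancel₀]; positivity
    rw [h3] at h2; linarith [h2]
  calc g n t = t ^ n * Real.exp (-t ^ 2 / 2) := rfl
  _ ≤ (t0 ^ n * Real.exp (t0 * t - t0 ^ 2)) * Real.exp (-t ^ 2 / 2) := by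
      apply mul_le_mul_of_nonneg_right ht_pow (Real.exp_pos _).le
  _ = t0 ^ n * Real.exp ((t0 * t - t0 ^ 2) + (-t ^ 2 / 2)) := by
      rw [Real.exp_add]; ring
  _ ≤ t0 ^ n * Real.exp (-t0 ^ 2 / 2) := by
      apply mul_le_mul_of_nonneg_left _ (by positivity)
      apply Real.exp_le_exp.mpr; nlinarith [sq_nonneg (t - t0)]
  _ = g n t0 := rfl

/-- Near-mode lower bound: for `√n ≤ s ≤ √n + 1/2`, `g n s ≥ g n √n * exp (-3/8)`. -/
lemma g_ge_near (n : ℕ) {s : ℝ} (h1 : Real.sqrt n ≤ s) (h2 : s ≤ Real.sqrt n + 1/2) :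
    g n (Real.sqrt n) * Real.exp (-(3/8 : ℝ)) ≤ g n s := by
  rcases Nat.eq_zero_or_pos n with h0 | hn
  · subst h0
    simp only [Nat.cast_zero, Real.sqrt_zero] at h1 h2 ⊢
    simp only [g, pow_zero, one_mul]
    calc Real.exp (-(0:ℝ) ^ 2 / 2) * Real.exp (-(3/8 : ℝ))
        = Real.exp (-(0:ℝ) ^ 2 / 2 + -(3/8 : ℝ)) := by rw [Real.exp_add]
    _ ≤ Real.exp (-s ^ 2 / 2) := by apply Real.exp_le_exp.mpr; nlinarith
  set t0 : ℝ := Real.sqrt n with ht0def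
  have ht0 : 0 ≤ t0 := Real.sqrt_nonneg _
  have ht0sq : t0 ^ 2 = n := Real.sq_sqrt (by positivity)
  have ht0pos : 0 < t0 := Real.sqrt_pos.mpr (by exact_mod_cast hn)
  set u : ℝ := s - t0 with hudef
  have hu0 : 0 ≤ u := by simp only [hudef]; linarith
  have hu1 : u ≤ 1/2 := by simp only [hudef]; linarith
  have hs : s = t0 + u := by rw [hudef]; ring
  set x : ℝ := u / t0 with hxdef
  have hx0 : 0 ≤ x := by positivity
  have hkey : Real.exp ((n : ℝ) * (x - x ^ 2)) ≤ (1 + x) ^ n := by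
    calc Real.exp ((n : ℝ) * (x - x ^ 2)) = (Real.exp (x - x ^ 2)) ^ n :=
          Real.exp_nat_mul _ n
    _ ≤ (1 + x) ^ n := pow_le_pow_left₀ (Real.exp_pos _).le (exp_sub_sq_le hx0) n
  have hsn : s ^ n = t0 ^ n * (1 + x) ^ n := by
    rw [← mul_pow]
    congr 1
    rw [hxdef, hs]
    field_simp
  have hnx : (n : ℝ) * (x - x ^ 2) = t0 * u - u ^ 2 := by
    rw [← ht0sq, hxdef]; field_simp
  have h38 : -t0 ^ 2 / 2 + -(3/8 : ℝ) ≤ (t0 * u - u ^ 2) + (-s ^ 2 / 2) := by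
    rw [hs]; nlinarith
  calc g n t0 * Real.exp (-(3/8 : ℝ))
      = t0 ^ n * Real.exp (-t0 ^ 2 / 2 + -(3/8 : ℝ)) := by
        rw [Real.exp_add]; simp only [g]; ring
  _ ≤ t0 ^ n * Real.exp ((t0 * u - u ^ 2) + (-s ^ 2 / 2)) := by
      apply mul_le_mul_of_nonneg_left (Real.exp_le_exp.mpr h38) (by positivity)
  _ = t0 ^ n * (Real.exp (t0 * u - u ^ 2) * Real.exp (-s ^ 2 / 2)) := by
      rw [Real.exp_add]
  _ ≤ t0 ^ n * ((1 + x) ^ n * Real.exp (-s ^ 2 / 2)) := by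
      apply mul_le_mul_of_nonneg_left _ (by positivity)
      apply mul_le_mul_of_nonneg_right _ (Real.exp_pos _).le
      rw [← hnx]; exact hkey
  _ = s ^ n * Real.exp (-s ^ 2 / 2) := by rw [hsn]; ring
  _ = g n s := rfl

lemma g_integrableOn (n : ℕ) : IntegrableOn (g n) (Ioi (0:ℝ)) volume := by
  have h := integrableOn_rpow_mul_exp_neg_mul_sq (b := (1/2 : ℝ)) (by norm_num)
    (s := (n : ℝ)) (lt_of_lt_of_le neg_one_lt_zero (Nat.cast_nonneg n))
  apply h.congr_fun _ measurableSet_Ioi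
  intro x _
  show x ^ ((n:ℝ)) * Real.exp (-(1/2 : ℝ) * x ^ 2) = g n x
  rw [Real.rpow_natCast]
  unfold g
  congr 1
  ring

/-- The full chi integral. -/
lemma g_integral (n : ℕ) :
    ∫ t in Ioi (0:ℝ), g n t
      = (2:ℝ) ^ ((n + 1 : ℝ) / 2 - 1) * Real.Gamma ((n + 1 : ℝ) / 2) := by
  have h := integral_rpow_mul_exp_neg_mul_rpow (p := (2:ℝ)) (q := (n : ℝ)) (b := (1/2 : ℝ))
    (by norm_num) (lt_of_lt_of_le neg_one_lt_zero (Nat.cast_nonneg n)) (by norm_num)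
  have heq : ∀ x ∈ Ioi (0:ℝ), x ^ ((n:ℝ)) * Real.exp (-(1/2 : ℝ) * x ^ (2:ℝ)) = g n x := by
    intro x hx
    rw [Real.rpow_natCast, Real.rpow_two]
    unfold g
    congr 1
    ring
  rw [setIntegral_congr_fun measurableSet_Ioi heq] at h
  rw [h]
  have h12 : ((1:ℝ)/2) ^ (-((n:ℝ) + 1) / 2) = (2:ℝ) ^ (((n:ℝ) + 1) / 2) := by
    rw [one_div, Real.inv_rpow (by norm_num), ← Real.rpow_neg (by norm_num)]
    ring_nf
  rw [h12]
  rw [show ((2:ℝ) ^ ((n + 1 : ℝ) / 2 - 1)) = (2:ℝ) ^ (((n:ℝ) + 1) / 2) * (2:ℝ)⁻¹ by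
    rw [Real.rpow_sub (by norm_num), Real.rpow_one]; ring]
  ring

/-- Lower bound on the chi normalization constant. -/
lemma gamma_lower (n : ℕ) :
    g n (Real.sqrt n) * Real.exp (-(3/8 : ℝ)) * (1/2)
      ≤ (2:ℝ) ^ ((n + 1 : ℝ) / 2 - 1) * Real.Gamma ((n + 1 : ℝ) / 2) := by
  rw [← g_integral n]
  set t0 : ℝ := Real.sqrt n with ht0def
  have ht0 : 0 ≤ t0 := Real.sqrt_nonneg _
  have hsub : Ioc t0 (t0 + 1/2) ⊆ Ioi (0:ℝ) := by
    intro x hx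
    exact lt_of_le_of_lt ht0 hx.1
  have hint := g_integrableOn n
  have hmono : ∫ t in Ioc t0 (t0 + 1/2), g n t ≤ ∫ t in Ioi (0:ℝ), g n t := by
    apply setIntegral_mono_set hint
    · filter_upwards [ae_restrict_mem measurableSet_Ioi] with x hx
      exact g_nonneg n (le_of_lt hx)
    · exact HasSubset.Subset.eventuallyLE hsub
  have hlow : g n t0 * Real.exp (-(3/8 : ℝ)) * (1/2)
      ≤ ∫ t in Ioc t0 (t0 + 1/2), g n t := by
    have h := setIntegral_ge_of_const_le (μ := volume) (c := g n t0 * Real.exp (-(3/8 : ℝ)))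
      (s := Ioc t0 (t0 + 1/2)) (f := g n) measurableSet_Ioc
      (by rw [Real.volume_Ioc]; exact ENNReal.ofReal_ne_top)
      (fun x hx => g_ge_near n (le_of_lt hx.1) hx.2)
      (hint.mono_set hsub)
    rw [Real.volume_real_Ioc_of_le (by linarith), smul_eq_mul, mul_comm] at h
    calc g n t0 * Real.exp (-(3/8 : ℝ)) * (1/2)
        = g n t0 * Real.exp (-(3/8 : ℝ)) * (t0 + 1/2 - t0) := by ring_nf
    _ ≤ _ := h
  linarith

end Stmt9Aux

/-- the density of the chi distribution with `d` degrees of freedom is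
uniformly bounded in `t ≥ 0` by a universal constant, for all `d ≥ 1`. -/
theorem stmt_9 :
    ∃ C : ℝ, 0 < C ∧ ∀ d : ℕ, 1 ≤ d → ∀ t : ℝ, 0 ≤ t → chiPDF d t ≤ C := by
  refine ⟨2 * Real.exp 1, by positivity, ?_⟩
  intro d hd t ht
  set n : ℕ := d - 1 with hndef
  have hdn : d = n + 1 := by omega
  have hdR : (d : ℝ) = (n : ℝ) + 1 := by rw [hdn]; push_cast; ring
  have hGpos : 0 < Real.Gamma ((d : ℝ) / 2) :=
    Real.Gamma_pos_of_pos (by positivity)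
  have hmax := Stmt9Aux.g_le_g_sqrt n ht
  have hgam := Stmt9Aux.gamma_lower n
  set t0 : ℝ := Real.sqrt n
  have hg0 : 0 ≤ Stmt9Aux.g n t0 := Stmt9Aux.g_nonneg n (Real.sqrt_nonneg _)
  -- from hgam : g n t0 ≤ 2 * exp(3/8) * 2^{d/2-1} * Γ(d/2)
  have hgam2 : Stmt9Aux.g n t0
      ≤ 2 * Real.exp (3/8 : ℝ) * ((2:ℝ) ^ ((d : ℝ) / 2 - 1) * Real.Gamma ((d : ℝ) / 2)) := by
    have h1 : Stmt9Aux.g n t0 * Real.exp (-(3/8 : ℝ)) * (1/2)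
        ≤ (2:ℝ) ^ ((d : ℝ) / 2 - 1) * Real.Gamma ((d : ℝ) / 2) := by
      rw [hdR]; exact hgam
    have h2 : (Stmt9Aux.g n t0 * Real.exp (-(3/8 : ℝ)) * (1/2)) * (2 * Real.exp (3/8 : ℝ))
        = Stmt9Aux.g n t0 := by
      have he : Real.exp (-(3/8 : ℝ)) * Real.exp (3/8 : ℝ) = 1 := by
        rw [← Real.exp_add]; norm_num
      calc (Stmt9Aux.g n t0 * Real.exp (-(3/8 : ℝ)) * (1/2)) * (2 * Real.exp (3/8 : ℝ))
          = Stmt9Aux.g n t0 * (Real.exp (-(3/8 : ℝ)) * Real.exp (3/8 : ℝ)) := by ring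
      _ = Stmt9Aux.g n t0 := by rw [he, mul_one]
    rw [← h2]
    calc (Stmt9Aux.g n t0 * Real.exp (-(3/8 : ℝ)) * (1/2)) * (2 * Real.exp (3/8 : ℝ))
        ≤ ((2:ℝ) ^ ((d : ℝ) / 2 - 1) * Real.Gamma ((d : ℝ) / 2)) * (2 * Real.exp (3/8 : ℝ)) := by
          apply mul_le_mul_of_nonneg_right h1 (by positivity)
    _ = 2 * Real.exp (3/8 : ℝ) * ((2:ℝ) ^ ((d : ℝ) / 2 - 1) * Real.Gamma ((d : ℝ) / 2)) := by ring
  have hchipdf : chiPDF d t = 2 ^ (1 - (d : ℝ) / 2) * Stmt9Aux.g n t / Real.Gamma ((d : ℝ) / 2) := by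
    unfold chiPDF Stmt9Aux.g
    rw [hdn]
    push_cast
    ring_nf
  rw [hchipdf]
  rw [div_le_iff₀ hGpos]
  have hpow : (2:ℝ) ^ (1 - (d : ℝ) / 2) * (2:ℝ) ^ ((d : ℝ) / 2 - 1) = 1 := by
    rw [← Real.rpow_add (by norm_num)]
    norm_num
  calc 2 ^ (1 - (d : ℝ) / 2) * Stmt9Aux.g n t
      ≤ 2 ^ (1 - (d : ℝ) / 2) * Stmt9Aux.g n t0 := by
        apply mul_le_mul_of_nonneg_left hmax (by positivity)
  _ ≤ 2 ^ (1 - (d : ℝ) / 2) *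
        (2 * Real.exp (3/8 : ℝ) * ((2:ℝ) ^ ((d : ℝ) / 2 - 1) * Real.Gamma ((d : ℝ) / 2))) := by
        apply mul_le_mul_of_nonneg_left hgam2 (by positivity)
  _ = 2 * Real.exp (3/8 : ℝ) * ((2:ℝ) ^ (1 - (d : ℝ) / 2) * (2:ℝ) ^ ((d : ℝ) / 2 - 1))
        * Real.Gamma ((d : ℝ) / 2) := by ring
  _ = 2 * Real.exp (3/8 : ℝ) * Real.Gamma ((d : ℝ) / 2) := by rw [hpow]; ring
  _ ≤ 2 * Real.exp 1 * Real.Gamma ((d : ℝ) / 2) := by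
        apply mul_le_mul_of_nonneg_right _ hGpos.le
        have : Real.exp (3/8 : ℝ) ≤ Real.exp 1 := Real.exp_le_exp.mpr (by norm_num)
        linarith
end

section
/- Let real-valued random variables X₁,...,X_n be independent and suppose there are positive numbers ν and c such that Σ_{i=1}^n E[X_i²] ≤ ν and Σ_{i=1}^n E[max(X_i,0)^q] ≤ q! ν c^{q−2}/2 for all integers q ≥ 3. Then for all t > 0, P(Σ_{i=1}^n (X_i − E X_i) ≥ √(2νt) + ct) ≤ e^{−t}. -/
open MeasureTheory ProbabilityTheory Real

lemma exp_le_quad {y : ℝ} (hy : y ≤ 0) : Real.exp y ≤ 1 + y + y^2/2 := by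
  have hanti : Antitone (fun y : ℝ => 1 + y + y^2/2 - Real.exp y) := by
    apply antitone_of_deriv_nonpos
    · fun_prop
    · intro x
      have h1 : HasDerivAt (fun y : ℝ => 1 + y + y^2/2 - Real.exp y)
          (0 + 1 + (↑2 * x ^ 1) / 2 - Real.exp x) x := by
        exact (((hasDerivAt_const x (1:ℝ)).add (hasDerivAt_id x)).add
          ((hasDerivAt_pow 2 x).div_const 2)).sub (Real.hasDerivAt_exp x)
      rw [h1.deriv]
      have := Real.add_one_le_exp x
      simp only [pow_one]
      push_cast
      linarith
  have h := hanti hy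
  simp only [Real.exp_zero] at h
  norm_num at h
  linarith

lemma tail_eq (y : ℝ) : ∑' q : ℕ, y^(q+3)/(Nat.factorial (q+3))
    = Real.exp y - (1 + y + y^2/2) := by
  have hs : Summable (fun q : ℕ => y^q / (Nat.factorial q)) := Real.summable_pow_div_factorial y
  have hs3 : Summable (fun q : ℕ => y^(q+3) / (Nat.factorial (q+3))) :=
    (summable_nat_add_iff 3).mpr hs
  have h := Summable.sum_add_tsum_nat_add' (f := fun q : ℕ => y^q / (Nat.factorial q)) (k := 3) hs3
  have hexp : Real.exp y = ∑' q : ℕ, y^q / (Nat.factorial q) := by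
    rw [Real.exp_eq_exp_ℝ, NormedSpace.exp_eq_tsum_div]
  rw [← hexp] at h
  have h3 : ∑ i ∈ Finset.range 3, y^i / (Nat.factorial i) = 1 + y + y^2/2 := by
    norm_num [Finset.sum_range_succ]
  rw [h3] at h
  linarith

lemma integrable_tsum_of_nonneg {Ω : Type*} [MeasurableSpace Ω] (P : Measure Ω)
    (F : ℕ → Ω → ℝ) (hFmeas : ∀ q, Measurable (F q))
    (hFpos : ∀ q ω, 0 ≤ F q ω) (hFint : ∀ q, Integrable (F q) P)
    (hptsum : ∀ ω, Summable (fun q => F q ω))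
    (hisum : Summable (fun q => ∫ ω, F q ω ∂P)) :
    Integrable (fun ω => ∑' q, F q ω) P := by
  have hmeas : Measurable (fun ω => ∑' q, F q ω) := by
    apply measurable_of_tendsto_metrizable (f := fun N ω => ∑ q ∈ Finset.range N, F q ω)
      (fun N => Finset.measurable_sum _ (fun q _ => hFmeas q))
    rw [tendsto_pi_nhds]
    exact fun ω => (hptsum ω).hasSum.tendsto_sum_nat
  refine ⟨hmeas.aestronglyMeasurable, ?_⟩
  rw [hasFiniteIntegral_iff_norm]
  have heq : ∀ ω, (ENNReal.ofReal ‖∑' q, F q ω‖) = ∑' q, ENNReal.ofReal (F q ω) := by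
    intro ω
    rw [Real.norm_of_nonneg (tsum_nonneg (fun q => hFpos q ω)),
      ENNReal.ofReal_tsum_of_nonneg (fun q => hFpos q ω) (hptsum ω)]
  simp_rw [heq]
  rw [lintegral_tsum (fun q => (hFmeas q).ennreal_ofReal.aemeasurable)]
  have h2 : ∀ q, ∫⁻ ω, ENNReal.ofReal (F q ω) ∂P = ENNReal.ofReal (∫ ω, F q ω ∂P) := by
    intro q
    rw [← ofReal_integral_eq_lintegral_ofReal (hFint q) (Filter.Eventually.of_forall (hFpos q))]
  simp_rw [h2]
  rw [← ENNReal.ofReal_tsum_of_nonneg (fun q => integral_nonneg (hFpos q)) hisum]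
  exact ENNReal.ofReal_lt_top

lemma bernstein_alg (ν c t a l s : ℝ) (hsq : ν*a^2 = 2*t) (hden : (0:ℝ) < 1 + c*a)
    (hl : l = a/(1+c*a)) (hs : s = ν*a + c*t) :
    -(l*s) + ν*l^2/(2*(1-l*c)) = -t := by
  have hlc : 1 - l*c = 1/(1+c*a) := by rw [hl, div_mul_eq_mul_div, one_sub_div hden.ne']; ring
  rw [hlc, hl, hs]
  field_simp
  rw [div_eq_iff (ne_of_gt (by linarith [mul_comm a c]))]
  linear_combination (-1) * hsq

/-- Bernstein's inequality for sub-exponential variables,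
Boucheron–Lugosi–Massart Thm 2.10: if `X₁,…,X_n` are independent real random
variables with `Σ E[Xᵢ²] ≤ ν` and `Σ E[(Xᵢ)₊^q] ≤ q! ν c^{q−2}/2` for all
integers `q ≥ 3`, then for all `t > 0`,
`P(Σ (Xᵢ − E Xᵢ) ≥ √(2νt) + ct) ≤ e^{−t}`. -/
theorem stmt_19 {Ω : Type} [MeasurableSpace Ω] (P : Measure Ω) [IsProbabilityMeasure P]
    (n : ℕ) (X : Fin n → Ω → ℝ) (hmeas : ∀ i, Measurable (X i))
    (hindep : iIndepFun X P)
    (hint1 : ∀ i, Integrable (X i) P)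
    (hint2 : ∀ i, Integrable (fun ω => X i ω ^ 2) P)
    (hintq : ∀ i, ∀ q : ℕ, 3 ≤ q → Integrable (fun ω => (max (X i ω) 0) ^ q) P)
    (ν c : ℝ) (hν : 0 < ν) (hc : 0 < c)
    (h2 : ∑ i, ∫ ω, X i ω ^ 2 ∂P ≤ ν)
    (hq : ∀ q : ℕ, 3 ≤ q →
      ∑ i, ∫ ω, (max (X i ω) 0) ^ q ∂P ≤ (Nat.factorial q) * ν * c ^ (q - 2) / 2) :
    ∀ t : ℝ, 0 < t →
      (P {ω | Real.sqrt (2 * ν * t) + c * t ≤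
          ∑ i, (X i ω - ∫ ω', X i ω' ∂P)}).toReal ≤ Real.exp (-t) := by
  intro t ht
  -- parameters
  set a : ℝ := Real.sqrt (2*t/ν) with ha_def
  have ha : 0 < a := Real.sqrt_pos.mpr (by positivity)
  have hsq : ν * a^2 = 2*t := by
    rw [ha_def, Real.sq_sqrt (by positivity)]
    field_simp
  set l : ℝ := a / (1 + c*a) with hl_def
  have hden : (0:ℝ) < 1 + c*a := by positivity
  have hl : 0 < l := div_pos ha hden
  have hlc1 : l * c < 1 := by
    rw [hl_def, div_mul_eq_mul_div, div_lt_one hden]; nlinarith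
  have hlc0 : 0 < 1 - l*c := by linarith
  have hlcnn : 0 ≤ l*c := by positivity
  set μ : Fin n → ℝ := fun i => ∫ ω', X i ω' ∂P with hμ_def
  set s : ℝ := Real.sqrt (2*ν*t) + c*t with hs_def
  have hsa : s = ν*a + c*t := by
    rw [hs_def]
    have h1 : 2*ν*t = (ν*a)^2 := by nlinarith [hsq]
    rw [h1, Real.sqrt_sq (by positivity)]
  -- the series functions
  set F : Fin n → ℕ → Ω → ℝ :=
    fun i q ω => l^(q+3) / (Nat.factorial (q+3)) * (max (X i ω) 0)^(q+3) with hF_def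
  have hFmeas : ∀ i q, Measurable (F i q) := fun i q =>
    (((hmeas i).max measurable_const).pow_const _).const_mul _
  have hFpos : ∀ i q ω, 0 ≤ F i q ω := by
    intro i q ω
    have h0 : (0:ℝ) ≤ max (X i ω) 0 := le_max_right _ _
    have hfac : (0:ℝ) < (Nat.factorial (q+3) : ℝ) := by positivity
    positivity
  have hFint : ∀ i q, Integrable (F i q) P := fun i q =>
    (hintq i (q+3) (by omega)).const_mul _
  have hFval : ∀ i q, ∫ ω, F i q ω ∂P
      = l^(q+3) / (Nat.factorial (q+3)) * ∫ ω, (max (X i ω) 0)^(q+3) ∂P := fun i q =>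
    integral_const_mul _ _
  set g : ℕ → ℝ := fun q => (ν*l^2/2*(l*c)) * (l*c)^q with hg_def
  have hqq : ∀ q : ℕ, ∑ i, ∫ ω, (max (X i ω) 0)^(q+3) ∂P
      ≤ (Nat.factorial (q+3)) * ν * c^(q+1)/2 := by
    intro q
    have := hq (q+3) (by omega)
    convert this using 4
    omega
  have hmnn : ∀ i q, 0 ≤ ∫ ω, (max (X i ω) 0)^(q+3) ∂P := fun i q =>
    integral_nonneg (fun ω => by positivity)
  have hmq : ∀ i q, ∫ ω, (max (X i ω) 0)^(q+3) ∂P ≤ (Nat.factorial (q+3)) * ν * c^(q+1)/2 := by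
    intro i q
    refine le_trans ?_ (hqq q)
    exact Finset.single_le_sum (f := fun j => ∫ ω, (max (X j ω) 0)^(q+3) ∂P)
      (fun j _ => hmnn j q) (Finset.mem_univ i)
  have hkey : ∀ q : ℕ, l^(q+3)/(Nat.factorial (q+3)) * ((Nat.factorial (q+3)) * ν * c^(q+1)/2)
      = g q := by
    intro q
    have hfac : ((Nat.factorial (q+3) : ℝ)) ≠ 0 := by positivity
    rw [hg_def]
    field_simp
    ring
  have hFi_le : ∀ i q, ∫ ω, F i q ω ∂P ≤ g q := by
    intro i q
    rw [hFval, ← hkey q]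
    have hcoef : 0 ≤ l^(q+3)/(Nat.factorial (q+3) : ℝ) := by positivity
    exact mul_le_mul_of_nonneg_left (hmq i q) hcoef
  have hFsum_le : ∀ q, ∑ i, ∫ ω, F i q ω ∂P ≤ g q := by
    intro q
    rw [← hkey q]
    calc ∑ i, ∫ ω, F i q ω ∂P
        = l^(q+3)/(Nat.factorial (q+3)) * ∑ i, ∫ ω, (max (X i ω) 0)^(q+3) ∂P := by
          rw [Finset.mul_sum]; exact Finset.sum_congr rfl (fun i _ => hFval i q)
      _ ≤ _ := mul_le_mul_of_nonneg_left (hqq q) (by positivity)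
  have hg_sum : Summable g := (summable_geometric_of_lt_one hlcnn hlc1).mul_left _
  have hFint_nn : ∀ i q, 0 ≤ ∫ ω, F i q ω ∂P := fun i q => integral_nonneg (hFpos i q)
  have hisum : ∀ i, Summable (fun q => ∫ ω, F i q ω ∂P) := fun i =>
    Summable.of_nonneg_of_le (hFint_nn i) (hFi_le i) hg_sum
  have hptsum : ∀ i ω, Summable (fun q => F i q ω) := by
    intro i ω
    have h := (summable_nat_add_iff 3).mpr
      (Real.summable_pow_div_factorial (l * max (X i ω) 0))
    refine h.congr (fun q => ?_)
    rw [hF_def]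
    simp only [mul_pow]
    ring
  set R : Fin n → Ω → ℝ := fun i ω => ∑' q, F i q ω with hR_def
  have hRint : ∀ i, Integrable (R i) P := fun i =>
    integrable_tsum_of_nonneg P (F i) (hFmeas i) (hFpos i) (hFint i) (hptsum i) (hisum i)
  have hRval : ∀ i, ∫ ω, R i ω ∂P = ∑' q, ∫ ω, F i q ω ∂P := by
    intro i
    refine (integral_tsum_of_summable_integral_norm (hFint i) ?_).symm
    refine (hisum i).congr (fun q => ?_)
    refine integral_congr_ae (Filter.Eventually.of_forall (fun ω => ?_))
    exact (Real.norm_of_nonneg (hFpos i q ω)).symm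
  have hRpt : ∀ i ω, R i ω = Real.exp (l * max (X i ω) 0)
      - (1 + l * max (X i ω) 0 + (l * max (X i ω) 0)^2/2) := by
    intro i ω
    rw [hR_def, ← tail_eq (l * max (X i ω) 0)]
    refine tsum_congr (fun q => ?_)
    rw [hF_def]
    simp only [mul_pow]
    ring
  -- pointwise bound on exp
  have hpt : ∀ i, ∀ ω, Real.exp (l * X i ω) ≤ 1 + l * X i ω + (l * X i ω)^2/2 + R i ω := by
    intro i ω
    rcases le_or_gt (X i ω) 0 with hx | hx
    · have hmax : max (X i ω) 0 = 0 := max_eq_right hx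
      rw [hRpt i ω, hmax]
      have hle := exp_le_quad (y := l * X i ω) (mul_nonpos_of_nonneg_of_nonpos hl.le hx)
      simp only [mul_zero, Real.exp_zero]
      norm_num
      linarith
    · have hmax : max (X i ω) 0 = X i ω := max_eq_left hx.le
      rw [hRpt i ω, hmax]
      exact le_of_eq (by ring)
  -- integrability of exp
  have hsqint : ∀ i, Integrable (fun ω => (l * X i ω)^2/2) P := by
    intro i
    have heq : (fun ω => (l * X i ω)^2/2) = fun ω => (l^2/2) * X i ω^2 := by
      funext ω; ring
    rw [heq]
    exact (hint2 i).const_mul _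
  set G : Fin n → Ω → ℝ := fun i ω => 1 + l * X i ω + (l * X i ω)^2/2 + R i ω with hG_def
  have hGint : ∀ i, Integrable (G i) P := by
    intro i
    exact (((integrable_const 1).add ((hint1 i).const_mul l)).add (hsqint i)).add (hRint i)
  have hexpint : ∀ i, Integrable (fun ω => Real.exp (l * X i ω)) P := by
    intro i
    refine Integrable.mono' (hGint i) (((hmeas i).const_mul l).exp.aestronglyMeasurable) ?_
    refine Filter.Eventually.of_forall (fun ω => ?_)
    rw [Real.norm_of_nonneg (Real.exp_nonneg _)]
    exact hpt i ω
  -- mgf bound for each i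
  have hGval : ∀ i, ∫ ω, G i ω ∂P
      = 1 + l * μ i + (∫ ω, (l * X i ω)^2/2 ∂P + ∫ ω, R i ω ∂P) := by
    intro i
    have i1 : Integrable (fun ω : Ω => (1:ℝ)) P := integrable_const 1
    have i2 : Integrable (fun ω => l * X i ω) P := (hint1 i).const_mul l
    have iA : Integrable (fun ω => 1 + l * X i ω) P := i1.add i2
    have iB : Integrable (fun ω => 1 + l * X i ω + (l * X i ω)^2/2) P := iA.add (hsqint i)
    have e0 : ∫ ω, G i ω ∂P = ∫ ω, (1 + l * X i ω + (l * X i ω)^2/2) + R i ω ∂P := rfl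
    rw [e0, integral_add iB (hRint i), integral_add iA (hsqint i), integral_add i1 i2,
      integral_const, integral_const_mul]
    simp [hμ_def]
    ring
  have hmgf : ∀ i, mgf (X i) P l
      ≤ Real.exp (l * μ i + (∫ ω, (l * X i ω)^2/2 ∂P + ∫ ω, R i ω ∂P)) := by
    intro i
    have h1 : mgf (X i) P l ≤ ∫ ω, G i ω ∂P :=
      integral_mono (hexpint i) (hGint i) (hpt i)
    rw [hGval i] at h1
    refine h1.trans ?_
    have := Real.add_one_le_exp (l * μ i + (∫ ω, (l * X i ω)^2/2 ∂P + ∫ ω, R i ω ∂P))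
    linarith
  -- Chernoff
  set ε : ℝ := s + ∑ i, μ i with hε_def
  have hset : {ω | s ≤ ∑ i, (X i ω - μ i)} = {ω | ε ≤ (∑ i, X i) ω} := by
    ext ω
    simp only [Set.mem_setOf_eq, Finset.sum_apply, Finset.sum_sub_distrib, hε_def]
    rw [le_sub_iff_add_le]
  have hint_sum : Integrable (fun ω => Real.exp (l * (∑ i, X i) ω)) P := by
    have h := hindep.integrable_exp_mul_sum hmeas (s := Finset.univ) (fun i _ => hexpint i)
    simpa using h
  have hchern := measure_ge_le_exp_mul_mgf (μ := P) (X := ∑ i, X i) ε hl.le hint_sum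
  have hgoal : {ω | Real.sqrt (2*ν*t) + c*t ≤ ∑ i, (X i ω - ∫ ω', X i ω' ∂P)}
      = {ω | ε ≤ (∑ i, X i) ω} := hset
  rw [hgoal]
  -- sum of R-integrals bound
  have hRsum : ∑ i, ∫ ω, R i ω ∂P ≤ ν*l^2/2*(l*c) * (1-l*c)⁻¹ := by
    have hswap : ∑ i, ∫ ω, R i ω ∂P = ∑' q, ∑ i, ∫ ω, F i q ω ∂P := by
      rw [Finset.sum_congr rfl (fun i _ => hRval i)]
      exact (Summable.tsum_finsetSum (fun i _ => hisum i)).symm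
    rw [hswap]
    have hsum2 : Summable (fun q => ∑ i, ∫ ω, F i q ω ∂P) :=
      summable_sum (fun i _ => hisum i)
    calc ∑' q, ∑ i, ∫ ω, F i q ω ∂P ≤ ∑' q, g q := Summable.tsum_le_tsum hFsum_le hsum2 hg_sum
      _ = ν*l^2/2*(l*c) * (1-l*c)⁻¹ := by
          rw [hg_def, tsum_mul_left, tsum_geometric_of_lt_one hlcnn hlc1]
  have hsqsum : ∑ i, ∫ ω, (l * X i ω)^2/2 ∂P ≤ l^2/2 * ν := by
    have heq : ∀ i, ∫ ω, (l * X i ω)^2/2 ∂P = l^2/2 * ∫ ω, X i ω^2 ∂P := by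
      intro i
      rw [← integral_const_mul]
      refine integral_congr_ae (Filter.Eventually.of_forall (fun ω => ?_))
      ring
    rw [Finset.sum_congr rfl (fun i _ => heq i), ← Finset.mul_sum]
    exact mul_le_mul_of_nonneg_left h2 (by positivity)
  -- final computation
  have halg : -(l*s) + ν*l^2/(2*(1-l*c)) = -t :=
    bernstein_alg ν c t a l s hsq hden hl_def hsa
  have hsplit : l^2/2*ν + ν*l^2/2*(l*c) * (1-l*c)⁻¹ = ν*l^2/(2*(1-l*c)) := by
    field_simp
    ring
  calc (P {ω | ε ≤ (∑ i, X i) ω}).toReal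
      ≤ Real.exp (-l*ε) * mgf (∑ i, X i) P l := hchern
    _ = Real.exp (-l*ε) * ∏ i, mgf (X i) P l := by
        rw [hindep.mgf_sum hmeas Finset.univ]
    _ ≤ Real.exp (-l*ε) * ∏ i, Real.exp (l * μ i
          + (∫ ω, (l * X i ω)^2/2 ∂P + ∫ ω, R i ω ∂P)) := by
        refine mul_le_mul_of_nonneg_left ?_ (Real.exp_nonneg _)
        exact Finset.prod_le_prod (fun i _ => mgf_nonneg) (fun i _ => hmgf i)
    _ = Real.exp (-l*ε + ∑ i, (l * μ i
          + (∫ ω, (l * X i ω)^2/2 ∂P + ∫ ω, R i ω ∂P))) := by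
        rw [← Real.exp_sum, ← Real.exp_add]
    _ ≤ Real.exp (-t) := by
        apply Real.exp_le_exp.mpr
        have hexpand : -l*ε + ∑ i, (l * μ i
            + (∫ ω, (l * X i ω)^2/2 ∂P + ∫ ω, R i ω ∂P))
            = -(l*s) + (∑ i, ∫ ω, (l * X i ω)^2/2 ∂P + ∑ i, ∫ ω, R i ω ∂P) := by
          rw [hε_def]
          rw [Finset.sum_add_distrib, Finset.sum_add_distrib, ← Finset.mul_sum]
          ring
        rw [hexpand]
        linarith [hRsum, hsqsum, halg, hsplit]
end
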